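/- Let I be an index set, R_i a commutative ring and M_i an R_i-module for each i ∈ I, R = ∏_i R_i, and E ⊆ R a multiplicative subset each of whose elements has all but finitely many components equal to 1, with each M_i E-torsion free (every component of every element of E acts injectively on M_i). Let Ē_i ⊆ R_i denote the image of E under the projection R → R_i. Then there is a short exact sequence 0 → ∏_i M_i → E^{-1}(∏_i M_i) → ⊕_i (Ē_i^{-1}M_i)/M_i → 0, i.e. the cokernel of the localization map ∏_i M_i → E^{-1}(∏_i M_i) is isomorphic to the direct sum over i of the cokernels of the componentwise localization maps M_i → Ē_i^{-1}M_i. -/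

import Mathlib

open scoped DirectSum

section

variable {ι : Type} (Rf : ι → Type) [∀ i, CommRing (Rf i)]
  (Mf : ι → Type) [∀ i, AddCommGroup (Mf i)] [∀ i, Module (Rf i) (Mf i)]

/-- Each `Rᵢ`-module is a module over the product ring `∏ i, R i` via the `i`-th
projection. -/
noncomputable local instance moduleOfProj (N : ι → Type) [∀ i, AddCommGroup (N i)]
    [∀ i, Module (Rf i) (N i)] (i : ι) : Module (∀ j, Rf j) (N i) :=
  Module.compHom (N i) (Pi.evalRingHom Rf i)

variable (E : Submonoid (∀ i, Rf i))

/-- The image `Ē_i` of `E` in `R_i` under the `i`-th projection. -/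
def Ebar (i : ι) : Submonoid (Rf i) := E.map (Pi.evalRingHom Rf i).toMonoidHom

/-- The cokernel of the localization map `M_i → Ē_i⁻¹ M_i`, an `R_i`-module. -/
abbrev LocCoker (i : ι) : Type :=
  LocalizedModule (Ebar Rf E i) (Mf i) ⧸
    LinearMap.range (LocalizedModule.mkLinearMap (Ebar Rf E i) (Mf i))

noncomputable local instance locEModule (i : ι) :
    Module (∀ j, Rf j) (LocalizedModule (Ebar Rf E i) (Mf i)) :=
  Module.compHom _ (Pi.evalRingHom Rf i)

-- generic lemmas
theorem mk_add_same {R : Type*} [CommRing R] {S : Submonoid R}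
    {M : Type*} [AddCommGroup M] [Module R M] (a b : M) (s : S) :
    LocalizedModule.mk (a + b) s = LocalizedModule.mk a s + LocalizedModule.mk b s := by
  rw [LocalizedModule.mk_add_mk, LocalizedModule.mk_eq]
  exact ⟨1, by rw [one_smul, one_smul, mul_smul, smul_add]⟩

theorem mk_sub_same {R : Type*} [CommRing R] {S : Submonoid R}
    {M : Type*} [AddCommGroup M] [Module R M] (a b : M) (s : S) :
    LocalizedModule.mk (a - b) s = LocalizedModule.mk a s - LocalizedModule.mk b s := by
  rw [eq_sub_iff_add_eq, ← mk_add_same, sub_add_cancel]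

theorem mk_sum_same {R : Type*} [CommRing R] {S : Submonoid R}
    {M : Type*} [AddCommGroup M] [Module R M] {α : Type*} (T : Finset α) (v : α → M) (s : S) :
    LocalizedModule.mk (∑ i ∈ T, v i) s = ∑ i ∈ T, LocalizedModule.mk (v i) s := by
  classical
  induction T using Finset.induction with
  | empty => simp
  | insert _ _ h ih => rw [Finset.sum_insert h, Finset.sum_insert h, mk_add_same, ih]

noncomputable def secE (i : ι) (s : Ebar Rf E i) : E :=
  ⟨(Submonoid.mem_map.mp s.2).choose, (Submonoid.mem_map.mp s.2).choose_spec.1⟩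

theorem secE_spec (i : ι) (s : Ebar Rf E i) : (secE Rf E i s : ∀ j, Rf j) i = (s : Rf i) :=
  (Submonoid.mem_map.mp s.2).choose_spec.2

theorem coe_mem_Ebar (i : ι) (e : E) : (e : ∀ j, Rf j) i ∈ Ebar Rf E i :=
  ⟨(e : ∀ j, Rf j), e.2, rfl⟩

theorem smul_single [DecidableEq ι] (i : ι) (r : ∀ j, Rf j) (m : Mf i) :
    r • Pi.single i m = Pi.single i (r i • m) := by
  funext j
  rcases eq_or_ne j i with rfl | hj
  · rw [Pi.smul_apply', Pi.single_eq_same, Pi.single_eq_same]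
  · rw [Pi.smul_apply', Pi.single_eq_of_ne hj, Pi.single_eq_of_ne hj, smul_zero]

theorem mk_single_eq [DecidableEq ι] (i : ι) (m m' : Mf i) (e e' : E) (u : Ebar Rf E i)
    (h : (u : Rf i) • ((e' : ∀ j, Rf j) i • m) = (u : Rf i) • ((e : ∀ j, Rf j) i • m')) :
    LocalizedModule.mk (Pi.single i m) e = LocalizedModule.mk (Pi.single i m') e' := by
  rw [LocalizedModule.mk_eq]
  refine ⟨secE Rf E i u, ?_⟩
  simp only [Submonoid.smul_def]
  rw [smul_single, smul_single, smul_single, smul_single, secE_spec, h]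

theorem mk_single_eq' [DecidableEq ι] (i : ι) (m m' : Mf i) (e e' : E)
    (h : (e' : ∀ j, Rf j) i • m = (e : ∀ j, Rf j) i • m') :
    LocalizedModule.mk (Pi.single i m) e = LocalizedModule.mk (Pi.single i m') e' :=
  mk_single_eq Rf Mf E i m m' e e' 1 (by rw [OneMemClass.coe_one, one_smul, one_smul, h])

abbrev BigCoker : Type _ :=
  LocalizedModule E (∀ i, Mf i) ⧸
    LinearMap.range (LocalizedModule.mkLinearMap E (∀ i, Mf i))

noncomputable def psiLoc [DecidableEq ι] (i : ι) :
    LocalizedModule (Ebar Rf E i) (Mf i) → BigCoker Rf Mf E :=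
  fun x => LocalizedModule.liftOn x
    (fun p => Submodule.Quotient.mk
      (LocalizedModule.mk (Pi.single i p.1) (secE Rf E i p.2)))
    (by
      rintro ⟨m, s⟩ ⟨m', s'⟩ ⟨u, hu⟩
      dsimp only
      congr 1
      refine mk_single_eq Rf Mf E i m m' _ _ u ?_
      rw [secE_spec, secE_spec]
      simpa only [Submonoid.smul_def] using hu)

theorem psiLoc_mk [DecidableEq ι] (i : ι) (m : Mf i) (s : Ebar Rf E i) :
    psiLoc Rf Mf E i (LocalizedModule.mk m s) =
      Submodule.Quotient.mk (LocalizedModule.mk (Pi.single i m) (secE Rf E i s)) := by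
  simp only [psiLoc, LocalizedModule.liftOn_mk]

theorem psiLoc_mk' [DecidableEq ι] (i : ι) (m : Mf i) (e : E) :
    psiLoc Rf Mf E i (LocalizedModule.mk m ⟨(e : ∀ j, Rf j) i, coe_mem_Ebar Rf E i e⟩) =
      Submodule.Quotient.mk (LocalizedModule.mk (Pi.single i m) e) := by
  rw [psiLoc_mk]
  congr 1
  exact mk_single_eq' Rf Mf E i m m _ e (by rw [secE_spec])

theorem psiLoc_add [DecidableEq ι] (i : ι) (x y : LocalizedModule (Ebar Rf E i) (Mf i)) :
    psiLoc Rf Mf E i (x + y) = psiLoc Rf Mf E i x + psiLoc Rf Mf E i y := by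
  induction x, y using LocalizedModule.induction_on₂ with
  | _ m m' s s' =>
    rw [LocalizedModule.mk_add_mk, psiLoc_mk, psiLoc_mk, psiLoc_mk,
        ← Submodule.Quotient.mk_add, LocalizedModule.mk_add_mk]
    congr 1
    have h1 : (secE Rf E i s' : E) • Pi.single i m + (secE Rf E i s : E) • Pi.single i m'
        = Pi.single i (s' • m + s • m') := by
      simp only [Submonoid.smul_def, smul_single, secE_spec]
      exact (Pi.single_add i _ _).symm
    rw [h1]
    refine mk_single_eq' Rf Mf E i _ _ _ _ ?_
    rw [Submonoid.coe_mul, Pi.mul_apply, secE_spec, secE_spec, secE_spec, Submonoid.coe_mul]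

theorem psiLoc_smul [DecidableEq ι] (i : ι) (r : ∀ j, Rf j)
    (x : LocalizedModule (Ebar Rf E i) (Mf i)) :
    psiLoc Rf Mf E i (r • x) = r • psiLoc Rf Mf E i x := by
  induction x using LocalizedModule.induction_on with
  | _ m s =>
    have h : r • (LocalizedModule.mk m s : LocalizedModule (Ebar Rf E i) (Mf i)) = LocalizedModule.mk ((r i) • m) s := by
      show (r i) • (LocalizedModule.mk m s : LocalizedModule (Ebar Rf E i) (Mf i)) = _
      rw [LocalizedModule.smul'_mk]
    rw [h, psiLoc_mk, psiLoc_mk, ← smul_single, ← LocalizedModule.smul'_mk,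
        Submodule.Quotient.mk_smul]

theorem psiLoc_range [DecidableEq ι] (i : ι) (z : LocalizedModule (Ebar Rf E i) (Mf i))
    (hz : z ∈ LinearMap.range (LocalizedModule.mkLinearMap (Ebar Rf E i) (Mf i))) :
    psiLoc Rf Mf E i z = 0 := by
  obtain ⟨m, rfl⟩ := hz
  rw [show (LocalizedModule.mkLinearMap (Ebar Rf E i) (Mf i)) m = LocalizedModule.mk m 1 from rfl,
      psiLoc_mk, Submodule.Quotient.mk_eq_zero]
  refine ⟨Pi.single i m, ?_⟩
  show LocalizedModule.mk (Pi.single i m) 1 = _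
  refine mk_single_eq' Rf Mf E i m m 1 _ ?_
  rw [secE_spec, OneMemClass.coe_one, OneMemClass.coe_one, Pi.one_apply]

theorem psiLoc_sub [DecidableEq ι] (i : ι) (x y : LocalizedModule (Ebar Rf E i) (Mf i)) :
    psiLoc Rf Mf E i (x - y) = psiLoc Rf Mf E i x - psiLoc Rf Mf E i y := by
  have h0 : psiLoc Rf Mf E i 0 = 0 := by
    have := psiLoc_range Rf Mf E i (LocalizedModule.mk 0 1) ⟨0, by simp⟩
    simpa using this
  have hneg : ∀ z, psiLoc Rf Mf E i (-z) = - psiLoc Rf Mf E i z := fun z => by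
    have := psiLoc_add Rf Mf E i z (-z)
    rw [add_neg_cancel, h0] at this
    exact eq_neg_of_add_eq_zero_right this.symm
  rw [sub_eq_add_neg, psiLoc_add, hneg, ← sub_eq_add_neg]

noncomputable def psiQ [DecidableEq ι] (i : ι) :
    LocCoker Rf Mf E i →ₗ[∀ j, Rf j] BigCoker Rf Mf E where
  toFun := fun q => Quotient.liftOn' q (psiLoc Rf Mf E i) (fun a b hab => by
    have h : a - b ∈ LinearMap.range (LocalizedModule.mkLinearMap (Ebar Rf E i) (Mf i)) :=
      (Submodule.quotientRel_def _).mp hab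
    have h2 := psiLoc_sub Rf Mf E i a b
    rw [psiLoc_range Rf Mf E i _ h] at h2
    exact (sub_eq_zero.mp h2.symm))
  map_add' := fun x y => by
    obtain ⟨a, rfl⟩ := Submodule.Quotient.mk_surjective _ x
    obtain ⟨b, rfl⟩ := Submodule.Quotient.mk_surjective _ y
    rw [← Submodule.Quotient.mk_add]
    exact psiLoc_add Rf Mf E i a b
  map_smul' := fun r x => by
    obtain ⟨a, rfl⟩ := Submodule.Quotient.mk_surjective _ x
    have key : ∀ q : LocCoker Rf Mf E i, r • q = (r i) • q := fun q => rfl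
    rw [key, ← Submodule.Quotient.mk_smul]
    exact psiLoc_smul Rf Mf E i r a

theorem psiQ_mk [DecidableEq ι] (i : ι) (z : LocalizedModule (Ebar Rf E i) (Mf i)) :
    psiQ Rf Mf E i (Submodule.Quotient.mk z) = psiLoc Rf Mf E i z := rfl

theorem sum_single_apply_mem [DecidableEq ι] (T : Finset ι) (m : ∀ j, Mf j) (j : ι)
    (hj : j ∈ T) : (∑ i ∈ T, Pi.single i (m i)) j = m j := by
  rw [Finset.sum_apply]
  rw [Finset.sum_eq_single_of_mem j hj (fun b _ hb => Pi.single_eq_of_ne (Ne.symm hb) _)]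
  exact Pi.single_eq_same j (m j)

theorem sum_single_apply_not_mem [DecidableEq ι] (T : Finset ι) (m : ∀ j, Mf j) (j : ι)
    (hj : j ∉ T) : (∑ i ∈ T, Pi.single i (m i)) j = 0 := by
  rw [Finset.sum_apply]
  exact Finset.sum_eq_zero fun b hb =>
    Pi.single_eq_of_ne (fun h => hj (by rw [h]; exact hb)) _

theorem key_sum [DecidableEq ι] (m : ∀ j, Mf j) (e : E) (T : Finset ι)
    (hT : ∀ j, j ∉ T → (e : ∀ j, Rf j) j = 1) :
    (Submodule.Quotient.mk (LocalizedModule.mk m e) : BigCoker Rf Mf E)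
      = ∑ i ∈ T, Submodule.Quotient.mk (LocalizedModule.mk (Pi.single i (m i)) e) := by
  have hsum : (∑ i ∈ T,
        (Submodule.Quotient.mk (LocalizedModule.mk (Pi.single i (m i)) e) : BigCoker Rf Mf E))
      = Submodule.Quotient.mk (LocalizedModule.mk (∑ i ∈ T, Pi.single i (m i)) e) := by
    rw [mk_sum_same]
    exact (map_sum (Submodule.mkQ _) _ T).symm
  rw [hsum, Submodule.Quotient.eq, ← mk_sub_same]
  refine ⟨m - ∑ i ∈ T, Pi.single i (m i), ?_⟩
  show LocalizedModule.mk (m - ∑ i ∈ T, Pi.single i (m i)) 1 = _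
  rw [LocalizedModule.mk_eq]
  refine ⟨1, ?_⟩
  simp only [Submonoid.smul_def, OneMemClass.coe_one, one_smul]
  funext j
  rw [Pi.smul_apply']
  by_cases hj : j ∈ T
  · rw [Pi.sub_apply, sum_single_apply_mem Mf T m j hj, sub_self, smul_zero]
  · rw [Pi.sub_apply, sum_single_apply_not_mem Mf T m j hj, sub_zero, hT j hj, one_smul]

theorem key_inj [DecidableEq ι]
    (htf : ∀ e ∈ E, ∀ i, Function.Injective (fun m : Mf i => e i • m))
    (T : Finset ι) (n : ∀ i, Mf i) (ε : ι → E)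
    (h : (∑ i ∈ T,
        (Submodule.Quotient.mk (LocalizedModule.mk (Pi.single i (n i)) (ε i)) : BigCoker Rf Mf E))
      = 0)
    (i : ι) (hi : i ∈ T) :
    (Submodule.Quotient.mk
        (LocalizedModule.mk (n i) ⟨(ε i : ∀ j, Rf j) i, coe_mem_Ebar Rf E i (ε i)⟩)
      : LocCoker Rf Mf E i) = 0 := by
  set e : E := ∏ j ∈ T, ε j with he
  set c : ι → E := fun i => ∏ j ∈ T.erase i, ε j with hcdef
  have hc : ∀ i ∈ T, c i * ε i = e := fun i hi => Finset.prod_erase_mul T ε hi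
  have hterm : ∀ j ∈ T, (LocalizedModule.mk (Pi.single j (n j)) (ε j) : LocalizedModule E _)
      = LocalizedModule.mk (Pi.single j ((c j : ∀ k, Rf k) j • n j)) e := by
    intro j hj
    rw [← hc j hj, ← LocalizedModule.mk_cancel_common_left (c j) (ε j) (Pi.single j (n j))]
    congr 1
    rw [Submonoid.smul_def, smul_single]
  rw [Finset.sum_congr rfl (fun j hj => by rw [hterm j hj])] at h
  rw [show (∑ j ∈ T, (Submodule.Quotient.mk
        (LocalizedModule.mk (Pi.single j ((c j : ∀ k, Rf k) j • n j)) e) : BigCoker Rf Mf E))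
      = Submodule.Quotient.mk (∑ j ∈ T,
          LocalizedModule.mk (Pi.single j ((c j : ∀ k, Rf k) j • n j)) e)
      from (map_sum (Submodule.mkQ _) _ T).symm,
    ← mk_sum_same, Submodule.Quotient.mk_eq_zero] at h
  obtain ⟨w, hw⟩ := h
  rw [show LocalizedModule.mkLinearMap E (∀ i, Mf i) w = LocalizedModule.mk w 1 from rfl,
      LocalizedModule.mk_eq] at hw
  obtain ⟨u, hu⟩ := hw
  simp only [Submonoid.smul_def, OneMemClass.coe_one, one_smul] at hu
  have hcomp : (u : ∀ j, Rf j) i • ((e : ∀ j, Rf j) i • w i)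
      = (u : ∀ j, Rf j) i • ((c i : ∀ j, Rf j) i • n i) := by
    have h1 := congrFun hu i
    rw [Pi.smul_apply', Pi.smul_apply', Pi.smul_apply'] at h1
    rw [h1, sum_single_apply_mem Mf T (fun j => (c j : ∀ k, Rf k) j • n j) i hi]
  have h2 : (e : ∀ j, Rf j) i • w i = (c i : ∀ j, Rf j) i • n i :=
    htf (u : ∀ j, Rf j) u.2 i hcomp
  rw [Submodule.Quotient.mk_eq_zero]
  refine ⟨w i, ?_⟩
  show LocalizedModule.mk (w i) 1 = _
  rw [LocalizedModule.mk_eq]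
  refine ⟨⟨(c i : ∀ j, Rf j) i, coe_mem_Ebar Rf E i (c i)⟩, ?_⟩
  simp only [Submonoid.smul_def, OneMemClass.coe_one, one_smul]
  show (c i : ∀ j, Rf j) i • ((ε i : ∀ j, Rf j) i • w i) = (c i : ∀ j, Rf j) i • n i
  rw [← mul_smul, ← Pi.mul_apply, ← Submonoid.coe_mul, hc i hi, h2]

/-- there is a short exact sequence
`0 → ∏ᵢ Mᵢ → E⁻¹(∏ᵢ Mᵢ) → ⊕ᵢ (Ēᵢ⁻¹Mᵢ)/Mᵢ → 0`; i.e. the localization map on the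
product is injective and its cokernel is isomorphic to the direct sum of the
cokernels of the componentwise localization maps. -/
theorem adelic_prod_localization_coker
    (hone : ∀ e ∈ E, {i | e i ≠ 1}.Finite)
    (htf : ∀ e ∈ E, ∀ i, Function.Injective (fun m : Mf i => e i • m)) :
    Function.Injective (LocalizedModule.mkLinearMap E (∀ i, Mf i)) ∧
    Nonempty
      ((LocalizedModule E (∀ i, Mf i) ⧸
          LinearMap.range (LocalizedModule.mkLinearMap E (∀ i, Mf i)))
        ≃ₗ[∀ j, Rf j] (⨁ i : ι, LocCoker Rf Mf E i)) := by
  classical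
  constructor
  · intro a b hab
    have hab' : LocalizedModule.mk a 1 = LocalizedModule.mk b 1 := hab
    rw [LocalizedModule.mk_eq] at hab'
    obtain ⟨u, hu⟩ := hab'
    simp only [Submonoid.smul_def, OneMemClass.coe_one, one_smul] at hu
    funext i
    refine htf (u : ∀ j, Rf j) u.2 i ?_
    have := congrFun hu i
    rw [Pi.smul_apply', Pi.smul_apply'] at this
    exact this
  · let Ψ : (⨁ i : ι, LocCoker Rf Mf E i) →ₗ[∀ j, Rf j] BigCoker Rf Mf E :=
      DirectSum.toModule _ _ _ (psiQ Rf Mf E)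
    have hΨof : ∀ (i : ι) (x : LocCoker Rf Mf E i),
        Ψ (DirectSum.of _ i x) = psiQ Rf Mf E i x := fun i x => by
      rw [← DirectSum.lof_eq_of (∀ j, Rf j)]
      exact DirectSum.toModule_lof _ _ _
    have hsurj : Function.Surjective Ψ := by
      intro y
      obtain ⟨z, rfl⟩ := Submodule.Quotient.mk_surjective _ y
      induction z using LocalizedModule.induction_on with
      | _ m e =>
        set T := (hone e e.2).toFinset with hT
        refine ⟨∑ i ∈ T, DirectSum.of _ i
          (Submodule.Quotient.mk
            (LocalizedModule.mk (m i) ⟨(e : ∀ j, Rf j) i, coe_mem_Ebar Rf E i e⟩)), ?_⟩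
        rw [map_sum]
        have hterm : ∀ i ∈ T, Ψ (DirectSum.of _ i
            (Submodule.Quotient.mk
              (LocalizedModule.mk (m i) ⟨(e : ∀ j, Rf j) i, coe_mem_Ebar Rf E i e⟩)))
            = Submodule.Quotient.mk (LocalizedModule.mk (Pi.single i (m i)) e) := by
          intro i _
          rw [hΨof, psiQ_mk, psiLoc_mk']
        rw [Finset.sum_congr rfl hterm]
        refine (key_sum Rf Mf E m e T ?_).symm
        intro j hj
        have := (Set.Finite.mem_toFinset (hone e e.2)).not.mp (by rw [← hT] at *; exact hj)
        simpa using this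
    have hinj : Function.Injective Ψ := by
      rw [injective_iff_map_eq_zero]
      intro x hx
      have hrep : ∀ i, ∃ p : Mf i × Ebar Rf E i,
          x i = Submodule.Quotient.mk (LocalizedModule.mk p.1 p.2) := by
        intro i
        obtain ⟨z, hz⟩ := Submodule.Quotient.mk_surjective _ (x i)
        induction z using LocalizedModule.induction_on with
        | _ m s => exact ⟨(m, s), hz.symm⟩
      choose p hp using hrep
      have hx2 : (∑ i ∈ DFinsupp.support x,
          (Submodule.Quotient.mk (LocalizedModule.mk (Pi.single i (p i).1)
            (secE Rf E i (p i).2)) : BigCoker Rf Mf E)) = 0 := by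
        rw [← hx]
        conv_rhs => rw [← DirectSum.sum_support_of x]
        rw [map_sum]
        refine Finset.sum_congr rfl ?_
        intro i _
        rw [hΨof, hp i, psiQ_mk, psiLoc_mk]
      have hzero : ∀ i ∈ DFinsupp.support x, x i = 0 := by
        intro i hi
        have h0 := key_inj Rf Mf E htf (DFinsupp.support x) (fun i => (p i).1)
          (fun i => secE Rf E i (p i).2) hx2 i hi
        have hsub : (⟨(secE Rf E i (p i).2 : ∀ j, Rf j) i,
            coe_mem_Ebar Rf E i (secE Rf E i (p i).2)⟩ : Ebar Rf E i) = (p i).2 :=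
          Subtype.ext (secE_spec Rf E i (p i).2)
        rw [hsub] at h0
        rw [hp i, h0]
      refine DFinsupp.ext fun i => ?_
      by_cases hi : i ∈ DFinsupp.support x
      · simp [hzero i hi]
      · simp [DFinsupp.notMem_support_iff.mp hi]
    exact ⟨(LinearEquiv.ofBijective Ψ ⟨hinj, hsurj⟩).symm⟩

end
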